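/- arXiv:2103.10041 — 8 statements merged into one kernel-verified Lean document; each statement's English description precedes it below -/
import Mathlib

section
/- Let n ≥ 8. With v₁ = {1,2,3}, v₂ = {4,5,6}, v₃ = {1,7,8} (so v₁ and v₃ share exactly the label 1, and both are disjoint from v₂), the number of 3-subsets of {1,…,n} that intersect each of v₁, v₂, v₃ is at most 3n + 3. -/
def S (n : ℕ) : Finset (Finset ℕ) :=
  (((Finset.Icc 1 n)).powersetCard 3).filter
      (fun w => (w ∩ ({1,2,3} : Finset ℕ)).Nonempty ∧
                (w ∩ ({4,5,6} : Finset ℕ)).Nonempty ∧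
                (w ∩ ({1,7,8} : Finset ℕ)).Nonempty)

lemma base : (S 8).card = 27 := by decide

lemma step (n : ℕ) (hn : 8 ≤ n) :
    S (n+1) ⊆ S n ∪ {({1,4,n+1} : Finset ℕ), {1,5,n+1}, {1,6,n+1}} := by
  intro w hw
  simp only [S, Finset.mem_filter, Finset.mem_powersetCard] at hw
  obtain ⟨⟨hsub, hcard⟩, h1, h2, h3⟩ := hw
  by_cases hmem : n+1 ∈ w
  · -- w contains n+1
    obtain ⟨b, hb⟩ := h1
    obtain ⟨a, ha⟩ := h2
    obtain ⟨c, hc⟩ := h3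
    simp only [Finset.mem_inter] at hb ha hc
    obtain ⟨hbw, hb'⟩ := hb
    obtain ⟨haw, ha'⟩ := ha
    obtain ⟨hcw, hc'⟩ := hc
    have hb8 : b ≤ 3 := by fin_cases hb' <;> omega
    have ha8 : 4 ≤ a ∧ a ≤ 6 := by fin_cases ha' <;> omega
    have hc8 : c = 1 ∨ (7 ≤ c ∧ c ≤ 8) := by fin_cases hc' <;> omega
    have hbc : b = c := by
      by_contra hne
      have h4 : ({b, c, a, n+1} : Finset ℕ) ⊆ w := by
        intro x hx
        simp only [Finset.mem_insert, Finset.mem_singleton] at hx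
        rcases hx with rfl|rfl|rfl|rfl <;> assumption
      have : ({b, c, a, n+1} : Finset ℕ).card = 4 := by
        rw [Finset.card_insert_of_notMem, Finset.card_insert_of_notMem,
            Finset.card_insert_of_notMem, Finset.card_singleton] <;> simp <;> omega
      have := Finset.card_le_card h4
      omega
    subst hbc
    have hb1 : b = 1 := by omega
    subst hb1
    have heq : ({1, a, n+1} : Finset ℕ) = w := by
      apply Finset.eq_of_subset_of_card_le
      · intro x hx
        simp only [Finset.mem_insert, Finset.mem_singleton] at hx
        rcases hx with rfl|rfl|rfl <;> assumption
      · rw [hcard]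
        rw [Finset.card_insert_of_notMem, Finset.card_insert_of_notMem,
            Finset.card_singleton] <;> simp <;> omega
    rw [Finset.mem_union]
    right
    simp only [Finset.mem_insert, Finset.mem_singleton]
    fin_cases ha' <;> simp_all
  · -- w ⊆ Icc 1 n
    rw [Finset.mem_union]
    left
    simp only [S, Finset.mem_filter, Finset.mem_powersetCard]
    refine ⟨⟨fun x hx => ?_, hcard⟩, h1, h2, h3⟩
    have := hsub hx
    simp only [Finset.mem_Icc] at this ⊢
    have : x ≠ n+1 := fun h => hmem (h ▸ hx)
    omega

/-- For `n ≥ 8`, the number of 3-subsets of `{1,…,n}` intersecting each of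
`{1,2,3}`, `{4,5,6}`, `{1,7,8}` (a Type 1 path) is at most `3n + 3`. -/
theorem stmt_1 (n : ℕ) (hn : 8 ≤ n) :
    ((((Finset.Icc 1 n)).powersetCard 3).filter
      (fun w => (w ∩ ({1,2,3} : Finset ℕ)).Nonempty ∧
                (w ∩ ({4,5,6} : Finset ℕ)).Nonempty ∧
                (w ∩ ({1,7,8} : Finset ℕ)).Nonempty)).card ≤ 3 * n + 3 := by
  have key : ∀ m, 8 ≤ m → (S m).card ≤ 3 * m + 3 := by
    intro m hm
    induction m, hm using Nat.le_induction with
    | base => rw [base]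
    | succ k hk ih =>
      calc (S (k+1)).card ≤ (S k ∪ {({1,4,k+1} : Finset ℕ), {1,5,k+1}, {1,6,k+1}}).card :=
            Finset.card_le_card (step k hk)
        _ ≤ (S k).card + ({({1,4,k+1} : Finset ℕ), {1,5,k+1}, {1,6,k+1}} : Finset (Finset ℕ)).card :=
            Finset.card_union_le _ _
        _ ≤ (S k).card + 3 := by
            have : ({({1,4,k+1} : Finset ℕ), {1,5,k+1}, {1,6,k+1}} : Finset (Finset ℕ)).card ≤ 3 := by
              apply le_trans (Finset.card_insert_le _ _)
              simp [Finset.card_insert_le]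
              exact lt_of_le_of_lt (Finset.card_insert_le _ _) (by simp)
            omega
        _ ≤ 3 * (k+1) + 3 := by omega
  exact key n hn
end

section
/- Let n ≥ 7. With v₁ = {1,2,3}, v₂ = {4,5,6}, v₃ = {1,2,7} (so v₁ and v₃ share exactly the two labels 1 and 2, and both are disjoint from v₂), the number of 3-subsets of {1,…,n} that intersect each of v₁, v₂, v₃ is at most 6n − 18. -/
open Finset

private lemma step_subset (n : ℕ) (hn : 7 ≤ n) :
    (((Finset.Icc 1 (n+1))).powersetCard 3).filter
      (fun w => (w ∩ ({1,2,3} : Finset ℕ)).Nonempty ∧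
                (w ∩ ({4,5,6} : Finset ℕ)).Nonempty ∧
                (w ∩ ({1,2,7} : Finset ℕ)).Nonempty)
    ⊆ (((Finset.Icc 1 n)).powersetCard 3).filter
      (fun w => (w ∩ ({1,2,3} : Finset ℕ)).Nonempty ∧
                (w ∩ ({4,5,6} : Finset ℕ)).Nonempty ∧
                (w ∩ ({1,2,7} : Finset ℕ)).Nonempty)
      ∪ ((({1,2} : Finset ℕ) ×ˢ ({4,5,6} : Finset ℕ)).image
          (fun p => ({p.1, p.2, n+1} : Finset ℕ))) := by
  intro w hw
  simp only [mem_filter, mem_powersetCard] at hw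
  obtain ⟨⟨hsub, hcard⟩, h1, h2, h3⟩ := hw
  by_cases hmem : n + 1 ∈ w
  · -- w contains n+1
    apply mem_union_right
    obtain ⟨a, ha⟩ := h1
    obtain ⟨a', ha'⟩ := h3
    obtain ⟨b, hb⟩ := h2
    simp only [mem_inter, mem_insert, mem_singleton] at ha ha' hb
    obtain ⟨haw, hav⟩ := ha
    obtain ⟨haw', hav'⟩ := ha'
    obtain ⟨hbw, hbv⟩ := hb
    have hne : n + 1 ≠ a ∧ n + 1 ≠ a' ∧ n + 1 ≠ b ∧ a ≠ b ∧ a' ≠ b := by omega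
    have haa' : a = a' := by
      by_contra hne'
      have hs : ({a, a', b, n+1} : Finset ℕ) ⊆ w := by
        intro x hx
        simp only [mem_insert, mem_singleton] at hx
        rcases hx with rfl | rfl | rfl | rfl <;> assumption
      have hc : ({a, a', b, n+1} : Finset ℕ).card = 4 := by
        rw [card_insert_of_notMem, card_insert_of_notMem, card_insert_of_notMem,
          card_singleton] <;> simp <;> omega
      have := card_le_card hs
      omega
    subst haa'
    have ha12 : a = 1 ∨ a = 2 := by omega
    simp only [mem_image, mem_product, mem_insert, mem_singleton]
    refine ⟨(a, b), ⟨ha12, hbv⟩, ?_⟩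
    have hs : ({a, b, n+1} : Finset ℕ) ⊆ w := by
      intro x hx
      simp only [mem_insert, mem_singleton] at hx
      rcases hx with rfl | rfl | rfl <;> assumption
    have hc : ({a, b, n+1} : Finset ℕ).card = 3 := by
      rw [card_insert_of_notMem, card_insert_of_notMem, card_singleton] <;> simp <;> omega
    show ({a, b, n+1} : Finset ℕ) = w
    exact eq_of_subset_of_card_le hs (by omega)
  · apply mem_union_left
    simp only [mem_filter, mem_powersetCard]
    refine ⟨⟨?_, hcard⟩, h1, h2, h3⟩
    intro x hx
    have := hsub hx
    simp only [mem_Icc] at this ⊢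
    have : x ≠ n + 1 := fun h => hmem (h ▸ hx)
    omega

/-- For `n ≥ 7`, the number of 3-subsets of `{1,…,n}` intersecting each of
`{1,2,3}`, `{4,5,6}`, `{1,2,7}` (a Type 2 path) is at most `6n − 18`. -/
theorem stmt_2 (n : ℕ) (hn : 7 ≤ n) :
    ((((Finset.Icc 1 n)).powersetCard 3).filter
      (fun w => (w ∩ ({1,2,3} : Finset ℕ)).Nonempty ∧
                (w ∩ ({4,5,6} : Finset ℕ)).Nonempty ∧
                (w ∩ ({1,2,7} : Finset ℕ)).Nonempty)).card ≤ 6 * n - 18 := by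
  induction n, hn using Nat.le_induction with
  | base => decide
  | succ n hn ih =>
    have h := card_le_card (step_subset n hn)
    have h2 := card_union_le
      ((((Finset.Icc 1 n)).powersetCard 3).filter
        (fun w => (w ∩ ({1,2,3} : Finset ℕ)).Nonempty ∧
                  (w ∩ ({4,5,6} : Finset ℕ)).Nonempty ∧
                  (w ∩ ({1,2,7} : Finset ℕ)).Nonempty))
      ((({1,2} : Finset ℕ) ×ˢ ({4,5,6} : Finset ℕ)).image
          (fun p => ({p.1, p.2, n+1} : Finset ℕ)))
    have h3 : ((({1,2} : Finset ℕ) ×ˢ ({4,5,6} : Finset ℕ)).image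
          (fun p => ({p.1, p.2, n+1} : Finset ℕ))).card ≤ 6 := by
      refine le_trans (card_image_le) ?_
      simp [card_product]
    omega
end

section
/- In KG(9,3), restrict to the 27 vertices {a,b,c} with a ∈ {1,2,3}, b ∈ {4,5,6}, c ∈ {7,8,9}. Any subset T of these 27 vertices whose induced subgraph contains no triangle satisfies |T| ≤ 18. -/
open Finset

private lemma tri_bound (T : Finset (Finset ℕ))
    (htri : ¬ ∃ x ∈ T, ∃ y ∈ T, ∃ z ∈ T, x ≠ y ∧ x ≠ z ∧ y ≠ z ∧
        Disjoint x y ∧ Disjoint x z ∧ Disjoint y z)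
    (x y z : Finset ℕ) (hxy : x ≠ y) (hxz : x ≠ z) (hyz : y ≠ z)
    (dxy : Disjoint x y) (dxz : Disjoint x z) (dyz : Disjoint y z) :
    (T ∩ {x, y, z}).card ≤ 2 := by
  by_contra h
  push_neg at h
  have hcard3 : ({x, y, z} : Finset (Finset ℕ)).card = 3 := by
    rw [card_insert_of_notMem (by simp [hxy, hxz]), card_insert_of_notMem (by simp [hyz]),
      card_singleton]
  have heq : T ∩ {x,y,z} = {x,y,z} :=
    eq_of_subset_of_card_le inter_subset_right (by omega)
  have hx : x ∈ T := (mem_inter.mp (heq ▸ (by simp : x ∈ ({x,y,z}:Finset (Finset ℕ))))).1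
  have hy : y ∈ T := (mem_inter.mp (heq ▸ (by simp : y ∈ ({x,y,z}:Finset (Finset ℕ))))).1
  have hz : z ∈ T := (mem_inter.mp (heq ▸ (by simp : z ∈ ({x,y,z}:Finset (Finset ℕ))))).1
  exact htri ⟨x, hx, y, hy, z, hz, hxy, hxz, hyz, dxy, dxz, dyz⟩

/-- Any triangle-free subset `T` of the 27 vertices `{a,b,c}` of `KG(9,3)` with
`a ∈ {1,2,3}`, `b ∈ {4,5,6}`, `c ∈ {7,8,9}` has at most 18 vertices. -/
theorem stmt_7 (T : Finset (Finset ℕ))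
    (hT : T ⊆ (((Finset.Icc 1 9)).powersetCard 3).filter
        (fun w => (w ∩ ({1,2,3} : Finset ℕ)).card = 1 ∧
                  (w ∩ ({4,5,6} : Finset ℕ)).card = 1 ∧
                  (w ∩ ({7,8,9} : Finset ℕ)).card = 1))
    (htri : ¬ ∃ x ∈ T, ∃ y ∈ T, ∃ z ∈ T, x ≠ y ∧ x ≠ z ∧ y ≠ z ∧
        Disjoint x y ∧ Disjoint x z ∧ Disjoint y z) :
    T.card ≤ 18 := by
  set P1 : Finset (Finset ℕ) := {{1,4,7},{2,5,8},{3,6,9}} with hP1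
  set P2 : Finset (Finset ℕ) := {{1,4,8},{2,5,9},{3,6,7}} with hP2
  set P3 : Finset (Finset ℕ) := {{1,4,9},{2,5,7},{3,6,8}} with hP3
  set P4 : Finset (Finset ℕ) := {{1,5,7},{2,6,8},{3,4,9}} with hP4
  set P5 : Finset (Finset ℕ) := {{1,5,8},{2,6,9},{3,4,7}} with hP5
  set P6 : Finset (Finset ℕ) := {{1,5,9},{2,6,7},{3,4,8}} with hP6
  set P7 : Finset (Finset ℕ) := {{1,6,7},{2,4,8},{3,5,9}} with hP7
  set P8 : Finset (Finset ℕ) := {{1,6,8},{2,4,9},{3,5,7}} with hP8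
  set P9 : Finset (Finset ℕ) := {{1,6,9},{2,4,7},{3,5,8}} with hP9
  have hV : (((Finset.Icc 1 9)).powersetCard 3).filter
        (fun w => (w ∩ ({1,2,3} : Finset ℕ)).card = 1 ∧
                  (w ∩ ({4,5,6} : Finset ℕ)).card = 1 ∧
                  (w ∩ ({7,8,9} : Finset ℕ)).card = 1)
      = P1 ∪ P2 ∪ P3 ∪ P4 ∪ P5 ∪ P6 ∪ P7 ∪ P8 ∪ P9 := by
    simp only [hP1, hP2, hP3, hP4, hP5, hP6, hP7, hP8, hP9]
    decide
  have hsub : T ⊆ P1 ∪ P2 ∪ P3 ∪ P4 ∪ P5 ∪ P6 ∪ P7 ∪ P8 ∪ P9 := hV ▸ hT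
  have b1 : (T ∩ P1).card ≤ 2 := tri_bound T htri _ _ _ (by decide) (by decide) (by decide) (by decide) (by decide) (by decide)
  have b2 : (T ∩ P2).card ≤ 2 := tri_bound T htri _ _ _ (by decide) (by decide) (by decide) (by decide) (by decide) (by decide)
  have b3 : (T ∩ P3).card ≤ 2 := tri_bound T htri _ _ _ (by decide) (by decide) (by decide) (by decide) (by decide) (by decide)
  have b4 : (T ∩ P4).card ≤ 2 := tri_bound T htri _ _ _ (by decide) (by decide) (by decide) (by decide) (by decide) (by decide)
  have b5 : (T ∩ P5).card ≤ 2 := tri_bound T htri _ _ _ (by decide) (by decide) (by decide) (by decide) (by decide) (by decide)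
  have b6 : (T ∩ P6).card ≤ 2 := tri_bound T htri _ _ _ (by decide) (by decide) (by decide) (by decide) (by decide) (by decide)
  have b7 : (T ∩ P7).card ≤ 2 := tri_bound T htri _ _ _ (by decide) (by decide) (by decide) (by decide) (by decide) (by decide)
  have b8 : (T ∩ P8).card ≤ 2 := tri_bound T htri _ _ _ (by decide) (by decide) (by decide) (by decide) (by decide) (by decide)
  have b9 : (T ∩ P9).card ≤ 2 := tri_bound T htri _ _ _ (by decide) (by decide) (by decide) (by decide) (by decide) (by decide)
  have hTeq : T = (T∩P1) ∪ (T∩P2) ∪ (T∩P3) ∪ (T∩P4) ∪ (T∩P5) ∪ (T∩P6) ∪ (T∩P7) ∪ (T∩P8) ∪ (T∩P9) := by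
    simp only [← inter_union_distrib_left]
    exact (inter_eq_left.mpr hsub).symm
  set A1 := T ∩ P1; set A2 := T ∩ P2; set A3 := T ∩ P3; set A4 := T ∩ P4
  set A5 := T ∩ P5; set A6 := T ∩ P6; set A7 := T ∩ P7; set A8 := T ∩ P8; set A9 := T ∩ P9
  have u1 := card_union_le A1 A2
  have u2 := card_union_le (A1 ∪ A2) A3
  have u3 := card_union_le (A1 ∪ A2 ∪ A3) A4
  have u4 := card_union_le (A1 ∪ A2 ∪ A3 ∪ A4) A5
  have u5 := card_union_le (A1 ∪ A2 ∪ A3 ∪ A4 ∪ A5) A6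
  have u6 := card_union_le (A1 ∪ A2 ∪ A3 ∪ A4 ∪ A5 ∪ A6) A7
  have u7 := card_union_le (A1 ∪ A2 ∪ A3 ∪ A4 ∪ A5 ∪ A6 ∪ A7) A8
  have u8 := card_union_le (A1 ∪ A2 ∪ A3 ∪ A4 ∪ A5 ∪ A6 ∪ A7 ∪ A8) A9
  rw [hTeq]
  omega
end

section
/- Let n ≥ 7 and let u, v be two adjacent vertices of KG(n,3). Then the set S of all vertices adjacent to u or to v (excluding u and v themselves) has size 2·((n−3 choose 3) − 1) − (n−6 choose 3) when n ≥ 9, and size 2·((n−3 choose 3) − 1) when 7 ≤ n ≤ 8; moreover deleting S disconnects KG(n,3), leaving {u, v} as one component. -/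
/-- The "disjointness" graph on all finite subsets of `ℕ`: two distinct finsets
are adjacent iff they are disjoint.  The Kneser graph `KG(n,k)` is its induced
subgraph on the `k`-subsets of `{1,…,n}`. -/
def KGbig : SimpleGraph (Finset ℕ) where
  Adj x y := x ≠ y ∧ Disjoint x y
  symm := ⟨fun x y h => ⟨h.1.symm, h.2.symm⟩⟩
  loopless := ⟨fun x h => h.1 rfl⟩

/-- The vertex set of the Kneser graph `KG(n,k)`: the `k`-element subsets of
`{1,…,n}`. -/
def vset (n k : ℕ) : Set (Finset ℕ) := {s | s ⊆ Finset.Icc 1 n ∧ s.card = k}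

/-- For adjacent vertices `u, v` of `KG(n,3)` (`n ≥ 7`), the set `S` of all
vertices adjacent to `u` or to `v` (excluding `u, v` themselves) has size
`2(C(n−3,3) − 1) − C(n−6,3)` when `n ≥ 9` and `2(C(n−3,3) − 1)` when
`7 ≤ n ≤ 8`; deleting `S` disconnects `KG(n,3)` and leaves `{u, v}` as one
component (no vertex outside `S` other than `u, v` is adjacent to `u` or `v`). -/
theorem stmt_11 (n : ℕ) (hn : 7 ≤ n) (u v : Finset ℕ)
    (hu : u ∈ vset n 3) (hv : v ∈ vset n 3) (huv : KGbig.Adj u v)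
    (S : Set (Finset ℕ))
    (hS : S = {w ∈ vset n 3 | (KGbig.Adj u w ∨ KGbig.Adj v w) ∧ w ≠ u ∧ w ≠ v}) :
    (9 ≤ n → S.ncard = 2 * ((n - 3).choose 3 - 1) - (n - 6).choose 3) ∧
    (n ≤ 8 → S.ncard = 2 * ((n - 3).choose 3 - 1)) ∧
    ¬ (KGbig.induce (vset n 3 \ S)).Connected ∧
    ∀ w ∈ vset n 3 \ S, w ≠ u → w ≠ v → ¬ KGbig.Adj u w ∧ ¬ KGbig.Adj v w := by
  obtain ⟨huI, hucard⟩ := hu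
  obtain ⟨hvI, hvcard⟩ := hv
  obtain ⟨hune, hdisj⟩ := huv
  have hIcard : (Finset.Icc 1 n).card = n := by
    rw [Nat.card_Icc]; omega
  -- the finsets A, B, I
  set A := (Finset.Icc 1 n \ u).powersetCard 3 with hA
  set B := (Finset.Icc 1 n \ v).powersetCard 3 with hB
  have memA : ∀ w, w ∈ A ↔ (w ⊆ Finset.Icc 1 n ∧ Disjoint w u) ∧ w.card = 3 := by
    intro w
    rw [hA, Finset.mem_powersetCard, Finset.subset_sdiff]
  have memB : ∀ w, w ∈ B ↔ (w ⊆ Finset.Icc 1 n ∧ Disjoint w v) ∧ w.card = 3 := by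
    intro w
    rw [hB, Finset.mem_powersetCard, Finset.subset_sdiff]
  have hvA : v ∈ A := (memA v).2 ⟨⟨hvI, hdisj.symm⟩, hvcard⟩
  have huB : u ∈ B := (memB u).2 ⟨⟨huI, hdisj⟩, hucard⟩
  have huA : u ∉ A := by
    intro h
    have := ((memA u).1 h).1.2
    have : u = ∅ := by simpa using disjoint_self.mp this
    simp [this] at hucard
  have hvB : v ∉ B := by
    intro h
    have := ((memB v).1 h).1.2
    have : v = ∅ := by simpa using disjoint_self.mp this
    simp [this] at hvcard
  -- S as a finset
  have hSF : S = ↑(((A ∪ B).erase u).erase v) := by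
    rw [hS]
    ext w
    simp only [Set.mem_setOf_eq, Finset.mem_coe, Finset.mem_erase, Finset.mem_union, vset]
    constructor
    · rintro ⟨⟨hwI, hwc⟩, hadj, hwu, hwv⟩
      refine ⟨hwv, hwu, ?_⟩
      rcases hadj with h | h
      · exact Or.inl ((memA w).2 ⟨⟨hwI, h.2.symm⟩, hwc⟩)
      · exact Or.inr ((memB w).2 ⟨⟨hwI, h.2.symm⟩, hwc⟩)
    · rintro ⟨hwv, hwu, hAB⟩
      rcases hAB with h | h
      · obtain ⟨⟨hwI, hd⟩, hwc⟩ := (memA w).1 h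
        exact ⟨⟨hwI, hwc⟩, Or.inl ⟨fun e => hwu e.symm, hd.symm⟩, hwu, hwv⟩
      · obtain ⟨⟨hwI, hd⟩, hwc⟩ := (memB w).1 h
        exact ⟨⟨hwI, hwc⟩, Or.inr ⟨fun e => hwv e.symm, hd.symm⟩, hwu, hwv⟩
  -- cardinalities
  have hAcard : A.card = (n - 3).choose 3 := by
    rw [hA, Finset.card_powersetCard, Finset.card_sdiff_of_subset huI, hIcard, hucard]
  have hBcard : B.card = (n - 3).choose 3 := by
    rw [hB, Finset.card_powersetCard, Finset.card_sdiff_of_subset hvI, hIcard, hvcard]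
  have hABinter : A ∩ B = (Finset.Icc 1 n \ (u ∪ v)).powersetCard 3 := by
    ext w
    simp only [Finset.mem_inter, memA, memB, Finset.mem_powersetCard,
      Finset.subset_sdiff, Finset.disjoint_union_right]
    tauto
  have huv6 : (u ∪ v).card = 6 := by
    rw [Finset.card_union_of_disjoint hdisj, hucard, hvcard]
  have hIntcard : (A ∩ B).card = (n - 6).choose 3 := by
    rw [hABinter, Finset.card_powersetCard, Finset.card_sdiff_of_subset
      (Finset.union_subset huI hvI), hIcard, huv6]
  have hABcard : (A ∪ B).card + (n - 6).choose 3 = 2 * (n - 3).choose 3 := by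
    have := Finset.card_union_add_card_inter A B
    omega
  have huAB : u ∈ A ∪ B := Finset.mem_union.2 (Or.inr huB)
  have hvAB : v ∈ (A ∪ B).erase u :=
    Finset.mem_erase.2 ⟨fun e => hune e.symm, Finset.mem_union.2 (Or.inl hvA)⟩
  have hScard : S.ncard + 2 + (n - 6).choose 3 = 2 * (n - 3).choose 3 := by
    rw [hSF, Set.ncard_coe_finset, Finset.card_erase_of_mem hvAB,
      Finset.card_erase_of_mem huAB]
    have h2 : 1 ≤ ((A ∪ B).erase u).card := Finset.card_pos.2 ⟨v, hvAB⟩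
    have h3 := Finset.card_erase_of_mem huAB
    omega
  have hC3 : 4 ≤ (n - 3).choose 3 := by
    have : (4 : ℕ).choose 3 ≤ (n - 3).choose 3 := Nat.choose_le_choose 3 (by omega)
    simpa using this
  have hC6 : (n - 6).choose 3 ≤ (n - 3).choose 3 := Nat.choose_le_choose 3 (by omega)
  -- last conjunct helper
  have hlast : ∀ w ∈ vset n 3 \ S, w ≠ u → w ≠ v → ¬ KGbig.Adj u w ∧ ¬ KGbig.Adj v w := by
    intro w hw hwu hwv
    constructor
    · intro hadj
      exact hw.2 (hS ▸ ⟨hw.1, Or.inl hadj, hwu, hwv⟩)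
    · intro hadj
      exact hw.2 (hS ▸ ⟨hw.1, Or.inr hadj, hwu, hwv⟩)
  -- u and v survive
  have huT : u ∈ vset n 3 \ S := by
    refine ⟨⟨huI, hucard⟩, ?_⟩
    rw [hS]; rintro ⟨_, _, h, _⟩; exact h rfl
  have hvT : v ∈ vset n 3 \ S := by
    refine ⟨⟨hvI, hvcard⟩, ?_⟩
    rw [hS]; rintro ⟨_, _, _, h⟩; exact h rfl
  -- a witness outside the component of u
  obtain ⟨a, ha⟩ := Finset.card_pos.1 (by rw [hucard]; norm_num : 0 < u.card)
  obtain ⟨x, hx⟩ := Finset.card_pos.1 (by rw [hvcard]; norm_num : 0 < v.card)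
  set w₀ := insert a (v.erase x) with hw₀
  have hanv : a ∉ v := fun h => (Finset.disjoint_left.mp hdisj ha) h
  have hane : a ∉ v.erase x := fun h => hanv (Finset.mem_of_mem_erase h)
  have hw₀card : w₀.card = 3 := by
    rw [hw₀, Finset.card_insert_of_notMem hane, Finset.card_erase_of_mem hx, hvcard]
  have hw₀I : w₀ ⊆ Finset.Icc 1 n :=
    Finset.insert_subset (huI ha) ((Finset.erase_subset x v).trans hvI)
  obtain ⟨y, hy⟩ := Finset.card_pos.1
    (by simp [Finset.card_erase_of_mem hx, hvcard] : 0 < (v.erase x).card)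
  have hyv : y ∈ v := Finset.mem_of_mem_erase hy
  have hyw : y ∈ w₀ := Finset.mem_insert_of_mem hy
  have hynu : y ∉ u := fun h => (Finset.disjoint_left.mp hdisj h) hyv
  have hw₀u : w₀ ≠ u := fun h => hynu (h ▸ hyw)
  have hw₀v : w₀ ≠ v := fun h => hanv (h ▸ Finset.mem_insert_self a _)
  have hnadju : ¬ KGbig.Adj u w₀ := by
    rintro ⟨_, hd⟩
    exact (Finset.disjoint_left.mp hd ha) (Finset.mem_insert_self a _)
  have hnadjv : ¬ KGbig.Adj v w₀ := by
    rintro ⟨_, hd⟩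
    exact (Finset.disjoint_left.mp hd hyv) hyw
  have hw₀T : w₀ ∈ vset n 3 \ S := by
    refine ⟨⟨hw₀I, hw₀card⟩, ?_⟩
    rw [hS]
    rintro ⟨_, h | h, _, _⟩
    · exact hnadju h
    · exact hnadjv h
  -- reachability closure of {u, v}
  have key : ∀ (x y : ↑(vset n 3 \ S)),
      (KGbig.induce (vset n 3 \ S)).Walk x y →
      ((x : Finset ℕ) = u ∨ (x : Finset ℕ) = v) →
      ((y : Finset ℕ) = u ∨ (y : Finset ℕ) = v) := by
    intro x y p
    induction p with
    | nil => exact id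
    | @cons a b c h p ih =>
      intro hx
      apply ih
      have hadj : KGbig.Adj (a : Finset ℕ) (b : Finset ℕ) := h
      rcases hx with hx | hx
      · by_cases hbv : (b : Finset ℕ) = v
        · exact Or.inr hbv
        · exfalso
          exact (hlast b b.2 (fun e => hadj.1 (hx ▸ e.symm)) hbv).1 (hx ▸ hadj)
      · by_cases hbu : (b : Finset ℕ) = u
        · exact Or.inl hbu
        · exfalso
          exact (hlast b b.2 hbu (fun e => hadj.1 (hx ▸ e.symm))).2 (hx ▸ hadj)
  have hnconn : ¬ (KGbig.induce (vset n 3 \ S)).Connected := by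
    intro hconn
    obtain ⟨p⟩ := hconn.preconnected ⟨u, huT⟩ ⟨w₀, hw₀T⟩
    rcases key _ _ p (Or.inl rfl) with h | h
    · exact hw₀u h
    · exact hw₀v h
  refine ⟨?_, ?_, hnconn, hlast⟩
  · intro _; omega
  · intro h8
    have : (n - 6).choose 3 = 0 := Nat.choose_eq_zero_of_lt (by omega)
    omega
end

section
/- Let n ≥ 9 and let u, v be adjacent vertices of KG(n,3), and let S = (N(u) ∪ N(v)) \ {u,v}. Then KG(n,3) − S has no isolated vertex, i.e., S is a super vertex cut of size 2·((n−3 choose 3) − 1) − (n−6 choose 3). -/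
lemma fresh {T X : Finset ℕ} (h : X ⊆ T) (hlt : X.card < T.card) : ∃ c ∈ T, c ∉ X := by
  have hpos : 0 < (T \ X).card := by
    rw [Finset.card_sdiff_of_subset h]; omega
  obtain ⟨c, hc⟩ := Finset.card_pos.1 hpos
  rw [Finset.mem_sdiff] at hc
  exact ⟨c, hc.1, hc.2⟩

lemma card3 {a b c : ℕ} (hab : a ≠ b) (hac : a ≠ c) (hbc : b ≠ c) :
    ({a, b, c} : Finset ℕ).card = 3 := by
  rw [Finset.card_insert_of_notMem (by simp [hab, hac]),
    Finset.card_insert_of_notMem (by simp [hbc]), Finset.card_singleton]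

/-- For `n ≥ 9` and adjacent vertices `u, v` of `KG(n,3)`, the set
`S = (N(u) ∪ N(v)) \ {u,v}` is a super vertex cut: its deletion disconnects the
graph, leaves no isolated vertex, and `|S| = 2(C(n−3,3) − 1) − C(n−6,3)`. -/
theorem stmt_12 (n : ℕ) (hn : 9 ≤ n) (u v : Finset ℕ)
    (hu : u ∈ vset n 3) (hv : v ∈ vset n 3) (huv : KGbig.Adj u v)
    (S : Set (Finset ℕ))
    (hS : S = {w ∈ vset n 3 | (KGbig.Adj u w ∨ KGbig.Adj v w) ∧ w ≠ u ∧ w ≠ v}) :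
    ¬ (KGbig.induce (vset n 3 \ S)).Connected ∧
    (∀ w ∈ vset n 3 \ S, ∃ x ∈ vset n 3 \ S, KGbig.Adj w x) ∧
    S.ncard = 2 * ((n - 3).choose 3 - 1) - (n - 6).choose 3 := by
  classical
  obtain ⟨hu1, hu2⟩ := hu
  obtain ⟨hv1, hv2⟩ := hv
  obtain ⟨hne, hdisj⟩ := huv
  set T := Finset.Icc 1 n with hT
  have hTcard : T.card = n := by simp [hT]
  -- u and v are not in S
  have huS : u ∉ S := by rw [hS]; rintro ⟨-, -, h, -⟩; exact h rfl
  have hvS : v ∉ S := by rw [hS]; rintro ⟨-, -, -, h⟩; exact h rfl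
  have hu' : u ∈ vset n 3 \ S := ⟨⟨hu1, hu2⟩, huS⟩
  have hv' : v ∈ vset n 3 \ S := ⟨⟨hv1, hv2⟩, hvS⟩
  -- a vertex meeting both u and v
  obtain ⟨a0, ha0⟩ := Finset.card_pos.1 (by omega : 0 < u.card)
  obtain ⟨b0, hb0⟩ := Finset.card_pos.1 (by omega : 0 < v.card)
  have hcard_uv : (u ∪ v).card = 6 := by
    rw [Finset.card_union_of_disjoint hdisj]; omega
  obtain ⟨c0, hc0T, hc0⟩ : ∃ c ∈ T, c ∉ u ∪ v :=
    fresh (Finset.union_subset hu1 hv1) (by omega)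
  have hc0u : c0 ∉ u := fun h => hc0 (Finset.mem_union_left _ h)
  have hc0v : c0 ∉ v := fun h => hc0 (Finset.mem_union_right _ h)
  have hab0 : a0 ≠ b0 := fun h => Finset.disjoint_left.1 hdisj ha0 (h ▸ hb0)
  have hw0card : ({a0, b0, c0} : Finset ℕ).card = 3 :=
    card3 hab0 (fun h => hc0u (h ▸ ha0)) (fun h => hc0v (h ▸ hb0))
  set w0 : Finset ℕ := {a0, b0, c0} with hw0
  have hw0T : w0 ⊆ T := by
    intro x hx
    simp only [hw0, Finset.mem_insert, Finset.mem_singleton] at hx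
    rcases hx with rfl | rfl | rfl
    exacts [hu1 ha0, hv1 hb0, hc0T]
  have hw0u : ¬ Disjoint u w0 :=
    fun h => Finset.disjoint_left.1 h ha0 (by simp [hw0])
  have hw0v : ¬ Disjoint v w0 :=
    fun h => Finset.disjoint_left.1 h hb0 (by simp [hw0])
  have hw0S : w0 ∉ S := by
    rw [hS]; rintro ⟨-, h | h, -, -⟩
    exacts [hw0u h.2, hw0v h.2]
  have hw0ne_u : w0 ≠ u := fun h => hw0v (h ▸ hdisj.symm)
  have hw0ne_v : w0 ≠ v := fun h => hw0u (h ▸ hdisj)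
  have hw0' : w0 ∈ vset n 3 \ S := ⟨⟨hw0T, hw0card⟩, hw0S⟩
  refine ⟨?_, ?_, ?_⟩
  · -- not connected
    intro hconn
    have hmemS : ∀ w : Finset ℕ, w ∈ vset n 3 → (KGbig.Adj u w ∨ KGbig.Adj v w) →
        w ≠ u → w ≠ v → w ∈ S := by
      intro w h1 h2 h3 h4
      rw [hS]
      exact ⟨h1, h2, h3, h4⟩
    have key : ∀ (x y : ↥(vset n 3 \ S)) (_ : (KGbig.induce (vset n 3 \ S)).Walk x y),
        (↑x = u ∨ ↑x = v) → (↑y = u ∨ ↑y = v) := by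
      intro x y p
      induction p with
      | nil => exact id
      | @cons a b c hadj p ih =>
        intro hx
        apply ih
        have hadj' : KGbig.Adj ↑a ↑b := hadj
        obtain ⟨hbv, hbS⟩ : ↑b ∈ vset n 3 \ S := b.2
        rcases hx with ha | ha
        · right
          by_contra hbv'
          rw [ha] at hadj'
          exact hbS (hmemS _ hbv (Or.inl hadj') (fun h => hadj'.1 h.symm) hbv')
        · left
          by_contra hbu'
          rw [ha] at hadj'
          exact hbS (hmemS _ hbv (Or.inr hadj') hbu' (fun h => hadj'.1 h.symm))
    obtain ⟨p⟩ := hconn.preconnected ⟨u, hu'⟩ ⟨w0, hw0'⟩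
    rcases key _ _ p (Or.inl rfl) with h | h
    exacts [hw0ne_u h, hw0ne_v h]
  · -- no isolated vertices
    rintro w ⟨⟨hw1, hw2⟩, hwS⟩
    by_cases hwu : w = u
    · exact ⟨v, hv', by rw [hwu]; exact ⟨hne, hdisj⟩⟩
    by_cases hwv : w = v
    · exact ⟨u, hu', by rw [hwv]; exact ⟨hne.symm, hdisj.symm⟩⟩
    -- w meets both u and v
    have hnadj : ¬ (KGbig.Adj u w ∨ KGbig.Adj v w) := by
      intro h
      exact hwS (by rw [hS]; exact ⟨⟨hw1, hw2⟩, h, hwu, hwv⟩)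
    push_neg at hnadj
    have hmu : ¬ Disjoint u w := by
      intro h; exact hnadj.1 ⟨fun he => hwu he.symm, h⟩
    have hmv : ¬ Disjoint v w := by
      intro h; exact hnadj.2 ⟨fun he => hwv he.symm, h⟩
    obtain ⟨x0, hx0u, hx0w⟩ := Finset.not_disjoint_iff.1 hmu
    -- pick a ∈ u \ w
    have hune : (u \ w).Nonempty := by
      rw [Finset.sdiff_nonempty]
      intro hsub
      exact hwu (Finset.eq_of_subset_of_card_le hsub (by omega)).symm
    obtain ⟨a, ha⟩ := hune
    rw [Finset.mem_sdiff] at ha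
    have hvne : (v \ w).Nonempty := by
      rw [Finset.sdiff_nonempty]
      intro hsub
      exact hwv (Finset.eq_of_subset_of_card_le hsub (by omega)).symm
    obtain ⟨b, hb⟩ := hvne
    rw [Finset.mem_sdiff] at hb
    -- fresh element outside u ∪ v ∪ w
    have heq : u ∪ v ∪ w = u ∪ v ∪ w.erase x0 := by
      ext y
      simp only [Finset.mem_union, Finset.mem_erase]
      constructor
      · rintro (h | h)
        · exact Or.inl h
        · by_cases hy : y = x0
          · exact Or.inl (Or.inl (hy ▸ hx0u))
          · exact Or.inr ⟨hy, h⟩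
      · rintro (h | h)
        exacts [Or.inl h, Or.inr h.2]
    have hcard_uvw : (u ∪ v ∪ w).card ≤ 8 := by
      rw [heq]
      calc (u ∪ v ∪ w.erase x0).card ≤ (u ∪ v).card + (w.erase x0).card :=
            Finset.card_union_le _ _
        _ ≤ 6 + 2 := by
            have := Finset.card_erase_of_mem hx0w
            omega
        _ = 8 := rfl
    obtain ⟨c, hcT, hc⟩ : ∃ c ∈ T, c ∉ u ∪ v ∪ w :=
      fresh (Finset.union_subset (Finset.union_subset hu1 hv1) hw1) (by omega)
    simp only [Finset.mem_union, not_or] at hc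
    obtain ⟨⟨hcu, hcv⟩, hcw⟩ := hc
    have habne : a ≠ b := fun h => Finset.disjoint_left.1 hdisj ha.1 (h ▸ hb.1)
    refine ⟨{a, b, c}, ⟨⟨?_, card3 habne (fun h => hcu (h ▸ ha.1))
      (fun h => hcv (h ▸ hb.1))⟩, ?_⟩, ?_, ?_⟩
    · intro y hy
      simp only [Finset.mem_insert, Finset.mem_singleton] at hy
      rcases hy with rfl | rfl | rfl
      exacts [hu1 ha.1, hv1 hb.1, hcT]
    · rw [hS]
      rintro ⟨-, h | h, -, -⟩
      · exact Finset.disjoint_left.1 h.2 ha.1 (by simp)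
      · exact Finset.disjoint_left.1 h.2 hb.1 (by simp)
    · intro h
      exact ha.2 (h ▸ (by simp : a ∈ ({a, b, c} : Finset ℕ)))
    · rw [Finset.disjoint_right]
      intro y hy
      simp only [Finset.mem_insert, Finset.mem_singleton] at hy
      rcases hy with rfl | rfl | rfl
      exacts [ha.2, hb.2, hcw]
  · -- cardinality
    set A := (T \ u).powersetCard 3 with hA
    set B := (T \ v).powersetCard 3 with hB
    have hSfin : S = ↑((A ∪ B) \ {u, v}) := by
      rw [hS]
      ext w
      simp only [Finset.coe_sdiff, Set.mem_diff, Finset.coe_union, Set.mem_union,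
        Finset.mem_coe, hA, hB, Finset.mem_powersetCard, Finset.subset_sdiff,
        Finset.coe_insert, Set.mem_insert_iff, Finset.coe_singleton,
        Set.mem_singleton_iff, Set.mem_setOf_eq, vset]
      constructor
      · rintro ⟨⟨hw1, hw2⟩, hadj, hwu, hwv⟩
        refine ⟨?_, by tauto⟩
        rcases hadj with h | h
        · exact Or.inl ⟨⟨hw1, h.2.symm⟩, hw2⟩
        · exact Or.inr ⟨⟨hw1, h.2.symm⟩, hw2⟩
      · rintro ⟨h, hne'⟩
        push_neg at hne'
        rcases h with ⟨⟨hw1, hd⟩, hw2⟩ | ⟨⟨hw1, hd⟩, hw2⟩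
        · exact ⟨⟨hw1, hw2⟩, Or.inl ⟨fun he => hne'.1 he.symm, hd.symm⟩, hne'.1, hne'.2⟩
        · exact ⟨⟨hw1, hw2⟩, Or.inr ⟨fun he => hne'.2 he.symm, hd.symm⟩, hne'.1, hne'.2⟩
    have hAcard : A.card = (n - 3).choose 3 := by
      rw [hA, Finset.card_powersetCard, Finset.card_sdiff_of_subset hu1, hTcard, hu2]
    have hBcard : B.card = (n - 3).choose 3 := by
      rw [hB, Finset.card_powersetCard, Finset.card_sdiff_of_subset hv1, hTcard, hv2]
    have hABeq : A ∩ B = (T \ (u ∪ v)).powersetCard 3 := by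
      ext s
      simp only [Finset.mem_inter, hA, hB, Finset.mem_powersetCard,
        Finset.sdiff_union_distrib, Finset.subset_inter_iff]
      tauto
    have hABcard : (A ∩ B).card = (n - 6).choose 3 := by
      rw [hABeq, Finset.card_powersetCard, Finset.card_sdiff_of_subset (Finset.union_subset hu1 hv1),
        hTcard, Finset.card_union_of_disjoint hdisj, hu2, hv2]
    have huB : u ∈ A ∪ B := by
      refine Finset.mem_union_right _ ?_
      rw [hB, Finset.mem_powersetCard, Finset.subset_sdiff]
      exact ⟨⟨hu1, hdisj⟩, hu2⟩
    have hvA : v ∈ A ∪ B := by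
      refine Finset.mem_union_left _ ?_
      rw [hA, Finset.mem_powersetCard, Finset.subset_sdiff]
      exact ⟨⟨hv1, hdisj.symm⟩, hv2⟩
    have hsub : ({u, v} : Finset (Finset ℕ)) ⊆ A ∪ B := by
      intro x hx
      simp only [Finset.mem_insert, Finset.mem_singleton] at hx
      rcases hx with rfl | rfl
      exacts [huB, hvA]
    have hcard2 : ({u, v} : Finset (Finset ℕ)).card = 2 := by
      rw [Finset.card_insert_of_notMem (by simpa using hne), Finset.card_singleton]
    have hmain : ((A ∪ B) \ {u, v}).card = (A ∪ B).card - 2 := by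
      rw [Finset.card_sdiff_of_subset hsub, hcard2]
    have hunion : (A ∪ B).card + (A ∩ B).card = A.card + B.card :=
      Finset.card_union_add_card_inter A B
    have hc1pos : 1 ≤ (n - 3).choose 3 := Nat.choose_pos (by omega)
    have hge : 2 ≤ (A ∪ B).card := hcard2 ▸ Finset.card_le_card hsub
    rw [hSfin, Set.ncard_coe_finset, hmain]
    omega
end

section
/- Let n ≥ 9 and suppose S ⊆ V(KG(n,3)) is such that KG(n,3) − S has at least two components, each with at least 2 vertices, and one component consists of exactly two adjacent vertices u, v. Then |S| ≥ 2·((n−3 choose 3) − 1) − (n−6 choose 3). -/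
/-- Let `n ≥ 9` and let `S` be a set of vertices of `KG(n,3)` whose deletion
leaves a disconnected graph with no isolated vertex, in which one component
consists of exactly the two adjacent vertices `u, v` (no other remaining vertex
is adjacent to `u` or `v`).  Then `|S| ≥ 2(C(n−3,3) − 1) − C(n−6,3)`. -/
theorem stmt_14 (n : ℕ) (hn : 9 ≤ n) (S : Set (Finset ℕ)) (hSv : S ⊆ vset n 3)
    (u v : Finset ℕ) (hu : u ∈ vset n 3 \ S) (hv : v ∈ vset n 3 \ S)
    (huv : KGbig.Adj u v)
    (hdisc : ¬ (KGbig.induce (vset n 3 \ S)).Connected)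
    (hnoiso : ∀ w ∈ vset n 3 \ S, ∃ x ∈ vset n 3 \ S, KGbig.Adj w x)
    (hcomp : ∀ w ∈ vset n 3 \ S, w ≠ u → w ≠ v → ¬ KGbig.Adj u w ∧ ¬ KGbig.Adj v w) :
    2 * ((n - 3).choose 3 - 1) - (n - 6).choose 3 ≤ S.ncard := by
  obtain ⟨⟨huI, huc⟩, huS⟩ := hu
  obtain ⟨⟨hvI, hvc⟩, hvS⟩ := hv
  obtain ⟨hne, hdisj⟩ := huv
  have hIcc : (Finset.Icc 1 n).card = n := by simp
  -- the neighborhoods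
  set Nu : Finset (Finset ℕ) := Finset.powersetCard 3 (Finset.Icc 1 n \ u) with hNu
  set Nv : Finset (Finset ℕ) := Finset.powersetCard 3 (Finset.Icc 1 n \ v) with hNv
  have hNuMem : ∀ w, w ∈ Nu ↔ w ⊆ Finset.Icc 1 n ∧ Disjoint u w ∧ w.card = 3 := by
    intro w
    simp only [hNu, Finset.mem_powersetCard, Finset.subset_sdiff]
    constructor
    · rintro ⟨⟨h1, h2⟩, h3⟩; exact ⟨h1, h2.symm, h3⟩
    · rintro ⟨h1, h2, h3⟩; exact ⟨⟨h1, h2.symm⟩, h3⟩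
  have hNvMem : ∀ w, w ∈ Nv ↔ w ⊆ Finset.Icc 1 n ∧ Disjoint v w ∧ w.card = 3 := by
    intro w
    simp only [hNv, Finset.mem_powersetCard, Finset.subset_sdiff]
    constructor
    · rintro ⟨⟨h1, h2⟩, h3⟩; exact ⟨h1, h2.symm, h3⟩
    · rintro ⟨h1, h2, h3⟩; exact ⟨⟨h1, h2.symm⟩, h3⟩
  have hNuCard : Nu.card = (n - 3).choose 3 := by
    rw [hNu, Finset.card_powersetCard, Finset.card_sdiff_of_subset huI, hIcc, huc]
  have hNvCard : Nv.card = (n - 3).choose 3 := by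
    rw [hNv, Finset.card_powersetCard, Finset.card_sdiff_of_subset hvI, hIcc, hvc]
  have hvNu : v ∈ Nu := (hNuMem v).2 ⟨hvI, hdisj, hvc⟩
  have huNv : u ∈ Nv := (hNvMem u).2 ⟨huI, hdisj.symm, huc⟩
  -- intersection card
  have hInter : (Nu ∩ Nv).card ≤ (n - 6).choose 3 := by
    have hsub : Nu ∩ Nv ⊆ Finset.powersetCard 3 (Finset.Icc 1 n \ (u ∪ v)) := by
      intro w hw
      rw [Finset.mem_inter] at hw
      obtain ⟨h1, h2, h3⟩ := (hNuMem w).1 hw.1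
      obtain ⟨_, h2', _⟩ := (hNvMem w).1 hw.2
      rw [Finset.mem_powersetCard, Finset.subset_sdiff]
      exact ⟨⟨h1, by rw [Finset.disjoint_union_right]; exact ⟨h2.symm, h2'.symm⟩⟩, h3⟩
    have hcard : (Finset.Icc 1 n \ (u ∪ v)).card = n - 6 := by
      have huvsub : u ∪ v ⊆ Finset.Icc 1 n := Finset.union_subset huI hvI
      rw [Finset.card_sdiff_of_subset huvsub, hIcc, Finset.card_union_of_disjoint hdisj, huc, hvc]
    calc (Nu ∩ Nv).card ≤ _ := Finset.card_le_card hsub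
      _ = (n - 6).choose 3 := by rw [Finset.card_powersetCard, hcard]
  -- the deleted neighborhoods are in S
  set A : Finset (Finset ℕ) := Nu.erase v with hA
  set B : Finset (Finset ℕ) := Nv.erase u with hB
  have hAS : ∀ w ∈ A ∪ B, w ∈ S := by
    intro w hw
    by_contra hwS
    have hwv : w ∈ vset n 3 \ S := by
      rcases Finset.mem_union.1 hw with h | h
      · obtain ⟨h1, h2, h3⟩ := (hNuMem w).1 (Finset.mem_of_mem_erase h)
        exact ⟨⟨h1, h3⟩, hwS⟩
      · obtain ⟨h1, h2, h3⟩ := (hNvMem w).1 (Finset.mem_of_mem_erase h)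
        exact ⟨⟨h1, h3⟩, hwS⟩
    have hcard3 : w.card = 3 := hwv.1.2
    have hwu : w ≠ u := by
      rcases Finset.mem_union.1 hw with h | h
      · obtain ⟨_, h2, _⟩ := (hNuMem w).1 (Finset.mem_of_mem_erase h)
        intro he; subst he
        have : w = ∅ := (Finset.disjoint_self_iff_empty w).1 h2
        simp [this] at hcard3
      · exact Finset.ne_of_mem_erase h
    have hwvne : w ≠ v := by
      rcases Finset.mem_union.1 hw with h | h
      · exact Finset.ne_of_mem_erase h
      · obtain ⟨_, h2, _⟩ := (hNvMem w).1 (Finset.mem_of_mem_erase h)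
        intro he; subst he
        have : w = ∅ := (Finset.disjoint_self_iff_empty w).1 h2
        simp [this] at hcard3
    obtain ⟨hnadju, hnadjv⟩ := hcomp w hwv hwu hwvne
    rcases Finset.mem_union.1 hw with h | h
    · obtain ⟨_, h2, _⟩ := (hNuMem w).1 (Finset.mem_of_mem_erase h)
      exact hnadju ⟨Ne.symm hwu, h2⟩
    · obtain ⟨_, h2, _⟩ := (hNvMem w).1 (Finset.mem_of_mem_erase h)
      exact hnadjv ⟨Ne.symm hwvne, h2⟩
  -- finiteness of S
  have hSfin : S.Finite := by
    apply Set.Finite.subset ((Finset.Icc 1 n).powerset : Finset (Finset ℕ)).finite_toSet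
    intro s hs
    exact Finset.mem_coe.2 (Finset.mem_powerset.2 (hSv hs).1)
  have hcardle : (A ∪ B).card ≤ S.ncard := by
    rw [← Set.ncard_coe_finset]
    exact Set.ncard_le_ncard (fun w hw => hAS w (by simpa using hw)) hSfin
  have hunion : (A ∪ B).card + (A ∩ B).card = A.card + B.card :=
    Finset.card_union_add_card_inter A B
  have hAcard : A.card = (n - 3).choose 3 - 1 := by
    rw [hA, Finset.card_erase_of_mem hvNu, hNuCard]
  have hBcard : B.card = (n - 3).choose 3 - 1 := by
    rw [hB, Finset.card_erase_of_mem huNv, hNvCard]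
  have hABinter : (A ∩ B).card ≤ (n - 6).choose 3 := by
    refine le_trans (Finset.card_le_card ?_) hInter
    exact Finset.inter_subset_inter (Finset.erase_subset _ _) (Finset.erase_subset _ _)
  have hpos : 1 ≤ (n - 3).choose 3 := Nat.choose_pos (by omega)
  omega
end

section
/- Let n ≥ 9 and suppose v₁ = {1,2,3}, v₂ = {4,5,6}, v₃ = {7,8,9} form a triangle in one component C₁ and w₁ = {1,4,7}, w₂ = {2,5,8}, w₃ = {3,6,9} form a triangle in a different component C₂ of KG(n,3) − S for some vertex set S. Then |C₁ ∪ C₂| ≤ 45. -/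
/-- Row transversals: 3-sets meeting each of `{1,2,3}, {4,5,6}, {7,8,9}`. -/
def rowT : Finset (Finset ℕ) :=
  (({1,2,3} : Finset ℕ) ×ˢ ({4,5,6} : Finset ℕ) ×ˢ ({7,8,9} : Finset ℕ)).image
    (fun t => {t.1, t.2.1, t.2.2})

/-- Column transversals: 3-sets meeting each of `{1,4,7}, {2,5,8}, {3,6,9}`. -/
def colT : Finset (Finset ℕ) :=
  (({1,4,7} : Finset ℕ) ×ˢ ({2,5,8} : Finset ℕ) ×ˢ ({3,6,9} : Finset ℕ)).image
    (fun t => {t.1, t.2.1, t.2.2})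

lemma trans_props : ∀ r ∈ rowT ∪ colT, r ⊆ Finset.Icc 1 9 ∧ r.card = 3 := by set_option maxRecDepth 100000 in decide

lemma mem_trans_of (A B C : Finset ℕ) (y : Finset ℕ) (hcard : y.card = 3)
    (h1 : ¬ Disjoint y A) (h2 : ¬ Disjoint y B) (h3 : ¬ Disjoint y C)
    (hAB : Disjoint A B) (hAC : Disjoint A C) (hBC : Disjoint B C) :
    y ∈ (A ×ˢ B ×ˢ C).image (fun t => ({t.1, t.2.1, t.2.2} : Finset ℕ)) := by
  obtain ⟨a, hay, haA⟩ := Finset.not_disjoint_iff.1 h1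
  obtain ⟨b, hby, hbB⟩ := Finset.not_disjoint_iff.1 h2
  obtain ⟨c, hcy, hcC⟩ := Finset.not_disjoint_iff.1 h3
  have hab : a ≠ b := fun h => (Finset.disjoint_left.1 hAB) haA (h ▸ hbB)
  have hac : a ≠ c := fun h => (Finset.disjoint_left.1 hAC) haA (h ▸ hcC)
  have hbc : b ≠ c := fun h => (Finset.disjoint_left.1 hBC) hbB (h ▸ hcC)
  have hsub : ({a, b, c} : Finset ℕ) ⊆ y := by
    intro x hx
    simp only [Finset.mem_insert, Finset.mem_singleton] at hx
    rcases hx with rfl | rfl | rfl <;> assumption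
  have hcard' : ({a, b, c} : Finset ℕ).card = 3 := by
    rw [Finset.card_insert_of_notMem (by simp [hab, hac]),
      Finset.card_insert_of_notMem (by simp [hbc]), Finset.card_singleton]
  have heq : ({a, b, c} : Finset ℕ) = y :=
    Finset.eq_of_subset_of_card_le hsub (by rw [hcard, hcard'])
  rw [← heq]
  exact Finset.mem_image.2 ⟨(a, b, c), by simp [Finset.mem_product, haA, hbB, hcC], rfl⟩

/-- Let `n ≥ 9` and suppose the vertices of `KG(n,3)` are partitioned into `S`,
`C₁`, `C₂` with no edges between `C₁` and `C₂`, where `C₁` contains the triangle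
`{1,2,3}, {4,5,6}, {7,8,9}` and `C₂` contains the triangle
`{1,4,7}, {2,5,8}, {3,6,9}`.  Then `|C₁ ∪ C₂| ≤ 45`. -/
theorem stmt_15 (n : ℕ) (hn : 9 ≤ n) (S C₁ C₂ : Set (Finset ℕ))
    (hSv : S ⊆ vset n 3) (hC₁v : C₁ ⊆ vset n 3) (hC₂v : C₂ ⊆ vset n 3)
    (hcover : vset n 3 ⊆ S ∪ C₁ ∪ C₂)
    (hSC₁ : Disjoint S C₁) (hSC₂ : Disjoint S C₂) (hC₁C₂ : Disjoint C₁ C₂)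
    (hsep : ∀ x ∈ C₁, ∀ y ∈ C₂, ¬ KGbig.Adj x y)
    (h1 : ({1,2,3} : Finset ℕ) ∈ C₁) (h2 : ({4,5,6} : Finset ℕ) ∈ C₁)
    (h3 : ({7,8,9} : Finset ℕ) ∈ C₁)
    (h4 : ({1,4,7} : Finset ℕ) ∈ C₂) (h5 : ({2,5,8} : Finset ℕ) ∈ C₂)
    (h6 : ({3,6,9} : Finset ℕ) ∈ C₂) :
    (C₁ ∪ C₂).ncard ≤ 45 := by
  have hIcc : Finset.Icc 1 9 ⊆ Finset.Icc 1 n := Finset.Icc_subset_Icc_right hn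
  -- every vertex of C₂ is a row transversal
  have hC₂row : ∀ y ∈ C₂, y ∈ rowT := by
    intro y hy
    have hnd : ∀ v ∈ C₁, ¬ Disjoint y v := by
      intro v hv hd
      have hne : v ≠ y := fun h => Set.disjoint_left.1 hC₁C₂ hv (h ▸ hy)
      exact hsep v hv y hy ⟨hne, hd.symm⟩
    exact mem_trans_of _ _ _ y (hC₂v hy).2 (hnd _ h1) (hnd _ h2) (hnd _ h3)
      (by decide) (by decide) (by decide)
  -- every vertex of C₁ is a column transversal
  have hC₁col : ∀ x ∈ C₁, x ∈ colT := by
    intro x hx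
    have hnd : ∀ w ∈ C₂, ¬ Disjoint x w := by
      intro w hw hd
      have hne : x ≠ w := fun h => Set.disjoint_left.1 hC₁C₂ hx (h ▸ hw)
      exact hsep x hx w hw ⟨hne, hd⟩
    exact mem_trans_of _ _ _ x (hC₁v hx).2 (hnd _ h4) (hnd _ h5) (hnd _ h6)
      (by decide) (by decide) (by decide)
  -- vertices of rowT ∪ colT are in `vset n 3`
  have hvset : ∀ r ∈ rowT ∪ colT, r ∈ vset n 3 := by
    intro r hr
    have : r ⊆ Finset.Icc 1 9 ∧ r.card = 3 := trans_props r hr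
    exact ⟨this.1.trans hIcc, this.2⟩
  -- forcing lemmas
  have hforce1 : ∀ p ∈ C₁, ∀ r ∈ rowT, r ∉ colT → Disjoint p r → r ∈ S := by
    intro p hp r hr hrc hd
    have hne : p ≠ r := fun h => hrc (h ▸ hC₁col p hp)
    rcases hcover (hvset r (Finset.mem_union_left _ hr)) with (hS | hc1) | hc2
    · exact hS
    · exact absurd (hC₁col r hc1) hrc
    · exact absurd (⟨hne, hd⟩ : _ ∧ _) (hsep p hp r hc2)
  have hforce2 : ∀ p ∈ C₂, ∀ r ∈ colT, r ∉ rowT → Disjoint p r → r ∈ S := by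
    intro p hp r hr hrc hd
    have hne : r ≠ p := fun h => hrc (h ▸ hC₂row p hp)
    rcases hcover (hvset r (Finset.mem_union_right _ hr)) with (hS | hc1) | hc2
    · exact hS
    · exact absurd (⟨hne, hd.symm⟩ : _ ∧ _) (hsep r hc1 p hp)
    · exact absurd (hC₂row r hc2) hrc
  -- bound from a set of vertices known to be in S
  have bound : ∀ R : Finset (Finset ℕ), (∀ r ∈ R, r ∈ S) →
      ((rowT ∪ colT) \ R).card ≤ 45 → (C₁ ∪ C₂).ncard ≤ 45 := by
    intro R hR hcard
    have hsub : C₁ ∪ C₂ ⊆ ↑((rowT ∪ colT) \ R) := by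
      intro x hx
      simp only [Finset.coe_sdiff, Set.mem_diff, Finset.coe_union, Set.mem_union,
        Finset.mem_coe]
      constructor
      · rcases hx with hx | hx
        · exact Or.inr (hC₁col x hx)
        · exact Or.inl (hC₂row x hx)
      · intro hxR
        rcases hx with hx | hx
        · exact Set.disjoint_left.1 hSC₁ (hR x hxR) hx
        · exact Set.disjoint_left.1 hSC₂ (hR x hxR) hx
    calc (C₁ ∪ C₂).ncard ≤ (↑((rowT ∪ colT) \ R) : Set (Finset ℕ)).ncard :=
          Set.ncard_le_ncard hsub (Finset.finite_toSet _)
      _ = ((rowT ∪ colT) \ R).card := Set.ncard_coe_finset _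
      _ ≤ 45 := hcard
  -- helper: a permutation set is a vertex
  have hvs : ∀ p : Finset ℕ, p ∈ rowT → p ∈ vset n 3 := fun p hp =>
    hvset p (Finset.mem_union_left _ hp)
  -- case analysis on the Latin triple {1,5,9}, {2,6,7}, {3,4,8}
  have hforce1' : ∀ p ∈ C₁, ∀ R : Finset (Finset ℕ),
      (∀ r ∈ R, r ∈ rowT ∧ r ∉ colT ∧ Disjoint p r) →
      ((rowT ∪ colT) \ R).card ≤ 45 → (C₁ ∪ C₂).ncard ≤ 45 := by
    intro p hp R hR hc
    exact bound R (fun r hr => hforce1 p hp r (hR r hr).1 (hR r hr).2.1 (hR r hr).2.2) hc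
  have hforce2' : ∀ p ∈ C₂, ∀ R : Finset (Finset ℕ),
      (∀ r ∈ R, r ∈ colT ∧ r ∉ rowT ∧ Disjoint p r) →
      ((rowT ∪ colT) \ R).card ≤ 45 → (C₁ ∪ C₂).ncard ≤ 45 := by
    intro p hp R hR hc
    exact bound R (fun r hr => hforce2 p hp r (hR r hr).1 (hR r hr).2.1 (hR r hr).2.2) hc
  rcases hcover (hvs {1,5,9} (by decide)) with (hS0 | hc0) | hc0
  rotate_left
  · exact hforce1' _ hc0 {{2,4,7},{2,4,8},{2,6,8},{3,4,7},{3,6,7},{3,6,8}}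
      (by decide) (by decide)
  · exact hforce2' _ hc0 {{2,3,4},{2,4,6},{4,6,8},{2,3,7},{3,7,8},{6,7,8}}
      (by decide) (by decide)
  rcases hcover (hvs {2,6,7} (by decide)) with (hS1 | hc1) | hc1
  rotate_left
  · exact hforce1' _ hc1 {{1,4,8},{1,4,9},{1,5,8},{3,4,9},{3,5,8},{3,5,9}}
      (by decide) (by decide)
  · exact hforce2' _ hc1 {{1,3,5},{1,3,8},{1,8,9},{3,4,5},{4,5,9},{4,8,9}}
      (by decide) (by decide)
  rcases hcover (hvs {3,4,8} (by decide)) with (hS2 | hc2) | hc2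
  rotate_left
  · exact hforce1' _ hc2 {{1,5,7},{1,6,7},{1,6,9},{2,5,7},{2,5,9},{2,6,9}}
      (by decide) (by decide)
  · exact hforce2' _ hc2 {{1,2,6},{1,2,9},{1,5,6},{2,7,9},{5,6,7},{5,7,9}}
      (by decide) (by decide)
  exact bound {{1,5,9},{2,6,7},{3,4,8}}
    (by intro r hr; fin_cases hr <;> assumption) (by set_option maxRecDepth 100000 in decide)
end

section
/- In KG(n,3) with n ≥ 8 and v₁ = {1,2,3}, v₂ = {4,5,6}, v₃ = {1,7,8}, the 12 common non-neighbors of v₁, v₂, v₃ not containing label 1 induce a subgraph that is a disjoint union of two 6-cycles. -/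
instance KGbig.adjDec : DecidableRel KGbig.Adj := fun x y =>
  inferInstanceAs (Decidable (x ≠ y ∧ Disjoint x y))

def T1 : Finset (Finset ℕ) := {{2,4,7},{3,5,8},{2,6,7},{3,4,8},{2,5,7},{3,6,8}}
def T2 : Finset (Finset ℕ) := {{2,4,8},{3,5,7},{2,6,8},{3,4,7},{2,5,8},{3,6,7}}

lemma memA_iff (n : ℕ) (hn : 8 ≤ n) (s : Finset ℕ) :
    s ∈ {s ∈ vset n 3 | (s ∩ ({1,2,3} : Finset ℕ)).Nonempty ∧
        (s ∩ ({4,5,6} : Finset ℕ)).Nonempty ∧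
        (s ∩ ({1,7,8} : Finset ℕ)).Nonempty ∧ 1 ∉ s} ↔ s ∈ T1 ∪ T2 := by
  constructor
  · rintro ⟨⟨hsub, hcard⟩, h1, h2, h3, h4⟩
    obtain ⟨a, ha⟩ := h1
    obtain ⟨b, hb⟩ := h2
    obtain ⟨c, hc⟩ := h3
    simp only [Finset.mem_inter, Finset.mem_insert, Finset.mem_singleton] at ha hb hc
    obtain ⟨has, ha'⟩ := ha
    obtain ⟨hbs, hb'⟩ := hb
    obtain ⟨hcs, hc'⟩ := hc
    have ha2 : a = 2 ∨ a = 3 := by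
      rcases ha' with rfl | h
      · exact absurd has h4
      · exact h
    have hc2 : c = 7 ∨ c = 8 := by
      rcases hc' with rfl | h
      · exact absurd hcs h4
      · exact h
    have hsub2 : ({a,b,c} : Finset ℕ) ⊆ s := by
      intro x hx
      simp only [Finset.mem_insert, Finset.mem_singleton] at hx
      rcases hx with rfl | rfl | rfl <;> assumption
    rcases ha2 with rfl | rfl <;> rcases hb' with rfl | rfl | rfl <;>
        rcases hc2 with rfl | rfl <;>
      · have he := Finset.eq_of_subset_of_card_le hsub2 (by rw [hcard]; decide)
        rw [← he]; decide
  · intro hs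
    have hmem : ∀ x ∈ s, x ∈ Finset.Icc 1 n := by
      intro x hx
      rw [Finset.mem_Icc]
      have h18 : 1 ≤ x ∧ x ≤ 8 := by
        revert hx; revert x; revert hs; revert s; decide
      omega
    refine ⟨⟨hmem, ?_⟩, ?_, ?_, ?_, ?_⟩ <;> clear hmem hn <;> revert hs <;> revert s <;> decide

/-- Connectivity via an explicit Hamiltonian-like chain. -/
lemma conn_of_chain (S : Finset (Finset ℕ)) (v₀ : Finset ℕ) (l : List (Finset ℕ))
    (hl : (v₀ :: l).toFinset = S) (hchain : List.Chain KGbig.Adj v₀ l) :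
    (KGbig.induce (↑S : Set (Finset ℕ))).Connected := by
  have hv₀ : v₀ ∈ (↑S : Set (Finset ℕ)) := by
    rw [Finset.mem_coe, ← hl]; simp
  rw [SimpleGraph.connected_iff]
  refine ⟨?_, ⟨⟨v₀, hv₀⟩⟩⟩
  have key : ∀ (l' : List (Finset ℕ)) (u : Finset ℕ), List.Chain KGbig.Adj u l' →
      (∀ z ∈ l', z ∈ (↑S : Set (Finset ℕ))) →
      ∀ (hu : u ∈ (↑S : Set (Finset ℕ))), ∀ x ∈ l', ∀ (hx : x ∈ (↑S : Set (Finset ℕ))),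
      (KGbig.induce (↑S : Set (Finset ℕ))).Reachable ⟨u, hu⟩ ⟨x, hx⟩ := by
    intro l'
    induction l' with
    | nil => intro u _ _ _ x hx; exact absurd hx List.not_mem_nil
    | cons w t ih =>
      intro u hch hS hu x hx hxS
      rcases List.isChain_cons_cons.mp hch with ⟨hadj, hch⟩
      have hwS : w ∈ (↑S : Set (Finset ℕ)) := hS w List.mem_cons_self
      have r1 : (KGbig.induce (↑S : Set (Finset ℕ))).Reachable ⟨u, hu⟩ ⟨w, hwS⟩ :=
        SimpleGraph.Adj.reachable hadj
      rcases List.mem_cons.mp hx with rfl | hx'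
      · exact r1
      · exact r1.trans (ih w hch (fun z hz => hS z (List.mem_cons_of_mem w hz)) hwS x hx' hxS)
  have reach : ∀ (x : Finset ℕ) (hx : x ∈ (↑S : Set (Finset ℕ))),
      (KGbig.induce (↑S : Set (Finset ℕ))).Reachable ⟨v₀, hv₀⟩ ⟨x, hx⟩ := by
    intro x hx
    have hx2 : x ∈ (v₀ :: l).toFinset := by rw [hl]; exact Finset.mem_coe.mp hx
    rw [List.mem_toFinset, List.mem_cons] at hx2
    rcases hx2 with rfl | hxl
    · exact SimpleGraph.Reachable.refl _
    · exact key l v₀ hchain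
        (fun z hz => by rw [Finset.mem_coe, ← hl]; simp [hz]) hv₀ x hxl hx
  rintro ⟨x, hx⟩ ⟨y, hy⟩
  exact (reach x hx).symm.trans (reach y hy)

/-- In `KG(n,3)` with `n ≥ 8` and `v₁ = {1,2,3}`, `v₂ = {4,5,6}`,
`v₃ = {1,7,8}`, the 12 common non-neighbours of `v₁, v₂, v₃` not containing the
label 1 induce a subgraph which is the disjoint union of two 6-cycles: they
split into two disjoint sets of 6 vertices with no edges between them, each
inducing a connected 2-regular (hence cycle) graph. -/
theorem stmt_18 (n : ℕ) (hn : 8 ≤ n) (A : Set (Finset ℕ))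
    (hA : A = {s ∈ vset n 3 | (s ∩ ({1,2,3} : Finset ℕ)).Nonempty ∧
        (s ∩ ({4,5,6} : Finset ℕ)).Nonempty ∧
        (s ∩ ({1,7,8} : Finset ℕ)).Nonempty ∧ 1 ∉ s}) :
    A.ncard = 12 ∧
    ∃ A₁ A₂ : Set (Finset ℕ),
      A₁ ∪ A₂ = A ∧ Disjoint A₁ A₂ ∧ A₁.ncard = 6 ∧ A₂.ncard = 6 ∧
      (∀ x ∈ A₁, ∀ y ∈ A₂, ¬ KGbig.Adj x y) ∧
      (KGbig.induce A₁).Connected ∧ (KGbig.induce A₂).Connected ∧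
      (∀ x ∈ A₁, {y ∈ A₁ | KGbig.Adj x y}.ncard = 2) ∧
      (∀ x ∈ A₂, {y ∈ A₂ | KGbig.Adj x y}.ncard = 2) := by
  have hAT : A = ↑(T1 ∪ T2) := by
    rw [hA]; ext s; rw [Finset.mem_coe]; exact memA_iff n hn s
  constructor
  · rw [hAT, Set.ncard_coe_finset]; decide
  refine ⟨↑T1, ↑T2, ?_, ?_, ?_, ?_, ?_, ?_, ?_, ?_, ?_⟩
  · rw [hAT, ← Finset.coe_union]
  · rw [Finset.disjoint_coe]; decide
  · rw [Set.ncard_coe_finset]; decide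
  · rw [Set.ncard_coe_finset]; decide
  · intro x hx y hy
    have h : ∀ x ∈ T1, ∀ y ∈ T2, ¬ KGbig.Adj x y := by decide
    exact h x (Finset.mem_coe.mp hx) y (Finset.mem_coe.mp hy)
  · exact conn_of_chain T1 {2,4,7} [{3,5,8},{2,6,7},{3,4,8},{2,5,7},{3,6,8}]
      (by decide) (by repeat (first | exact List.Chain.nil | refine List.Chain.cons (by decide) ?_))
  · exact conn_of_chain T2 {2,4,8} [{3,5,7},{2,6,8},{3,4,7},{2,5,8},{3,6,7}]
      (by decide) (by repeat (first | exact List.Chain.nil | refine List.Chain.cons (by decide) ?_))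
  · intro x hx
    have he : {y ∈ (↑T1 : Set (Finset ℕ)) | KGbig.Adj x y}
        = ↑(T1.filter fun y => KGbig.Adj x y) := by
      ext y; simp
    rw [he, Set.ncard_coe_finset]
    have h : ∀ x ∈ T1, (T1.filter fun y => KGbig.Adj x y).card = 2 := by decide
    exact h x (Finset.mem_coe.mp hx)
  · intro x hx
    have he : {y ∈ (↑T2 : Set (Finset ℕ)) | KGbig.Adj x y}
        = ↑(T2.filter fun y => KGbig.Adj x y) := by
      ext y; simp
    rw [he, Set.ncard_coe_finset]
    have h : ∀ x ∈ T2, (T2.filter fun y => KGbig.Adj x y).card = 2 := by decide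
    exact h x (Finset.mem_coe.mp hx)
end
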